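/- Define the sequence S : ℕ → ℕ by S(1) = 0, S(2) = 1, S(3) = 1, and for k ≥ 1: S(4k) = 2S(2k) − S(k), S(4k+1) = 2S(2k) + S(2k+1), S(4k+2) = 2S(2k+1) + S(2k), S(4k+3) = 2S(2k+1) − S(k). Then for every n ∈ ℕ₀, the number of indices k ∈ ℕ with S(k) = n equals τ(n² + 1), the number of positive divisors of n² + 1. Moreover (S(2k) − S(k)) divides S(k)² + 1 for all k ≥ 1. -/
import Mathlib


/-- The sequence `𝒮` reading off the second components of the divisor pair tree
for `n² + 1`, defined by `𝒮(1) = 0`, `𝒮(2) = 1`, `𝒮(3) = 1` and, for `k ≥ 1`,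
`𝒮(4k) = 2𝒮(2k) − 𝒮(k)`, `𝒮(4k+1) = 2𝒮(2k) + 𝒮(2k+1)`,
`𝒮(4k+2) = 2𝒮(2k+1) + 𝒮(2k)`, `𝒮(4k+3) = 2𝒮(2k+1) − 𝒮(k)`. -/
def sternLike : ℕ → ℕ
  | 0 => 0
  | 1 => 0
  | 2 => 1
  | 3 => 1
  | n + 4 =>
    if (n + 4) % 4 = 0 then 2 * sternLike ((n + 4) / 2) - sternLike ((n + 4) / 4)
    else if (n + 4) % 4 = 1 then 2 * sternLike ((n + 4) / 2) + sternLike ((n + 4) / 2 + 1)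
    else if (n + 4) % 4 = 2 then 2 * sternLike ((n + 4) / 2) + sternLike ((n + 4) / 2 - 1)
    else 2 * sternLike ((n + 4) / 2) - sternLike ((n + 4) / 4)
  decreasing_by all_goals omega

lemma sl1 : sternLike 1 = 0 := by simp [sternLike]
lemma sl2 : sternLike 2 = 1 := by simp [sternLike]
lemma sl3 : sternLike 3 = 1 := by simp [sternLike]

lemma slA (j : ℕ) (h : 1 ≤ j) : sternLike (4*j) = 2 * sternLike (2*j) - sternLike j := by
  rw [show 4*j = (4*j-4)+4 by omega, sternLike, if_pos (by omega : (4*j-4+4)%4 = 0),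
    show (4*j-4+4)/2 = 2*j by omega, show (4*j-4+4)/4 = j by omega]

lemma slB (j : ℕ) (h : 1 ≤ j) : sternLike (4*j+1) = 2 * sternLike (2*j) + sternLike (2*j+1) := by
  rw [show 4*j+1 = (4*j-3)+4 by omega, sternLike, if_neg (by omega : ¬(4*j-3+4)%4 = 0),
    if_pos (by omega : (4*j-3+4)%4 = 1),
    show (4*j-3+4)/2 = 2*j by omega]

lemma slC (j : ℕ) (h : 1 ≤ j) : sternLike (4*j+2) = 2 * sternLike (2*j+1) + sternLike (2*j) := by
  rw [show 4*j+2 = (4*j-2)+4 by omega, sternLike, if_neg (by omega : ¬(4*j-2+4)%4 = 0),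
    if_neg (by omega : ¬(4*j-2+4)%4 = 1), if_pos (by omega : (4*j-2+4)%4 = 2),
    show (4*j-2+4)/2 = 2*j+1 by omega, show 2*j+1-1 = 2*j by omega]

lemma slD (j : ℕ) (h : 1 ≤ j) : sternLike (4*j+3) = 2 * sternLike (2*j+1) - sternLike j := by
  rw [show 4*j+3 = (4*j-1)+4 by omega, sternLike, if_neg (by omega : ¬(4*j-1+4)%4 = 0),
    if_neg (by omega : ¬(4*j-1+4)%4 = 1), if_neg (by omega : ¬(4*j-1+4)%4 = 2),
    show (4*j-1+4)/2 = 2*j+1 by omega, show (4*j-1+4)/4 = j by omega]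

lemma slKey : ∀ k, 1 ≤ k → ∃ a c, 0 < a ∧ 0 < c ∧
    sternLike (2*k) = sternLike k + a ∧ sternLike (2*k+1) = sternLike k + c ∧
    a * c = sternLike k ^ 2 + 1 := by
  intro k
  induction k using Nat.strong_induction_on with
  | _ k ih =>
    intro hk
    rcases eq_or_lt_of_le hk with h1 | h2
    · refine ⟨1, 1, one_pos, one_pos, ?_⟩
      rw [← h1]
      norm_num [sl1, sl2, sl3]
    · -- k ≥ 2
      obtain ⟨j, hj, hpar⟩ : ∃ j, 1 ≤ j ∧ (k = 2*j ∨ k = 2*j+1) := ⟨k/2, by omega, by omega⟩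
      obtain ⟨a₀, c₀, ha₀, hc₀, h2j, h2j1, hprod⟩ := ih j (by omega) hj
      set b₀ := sternLike j with hb₀
      rcases hpar with rfl | rfl
      · refine ⟨a₀, a₀ + 2*b₀ + c₀, ha₀, by omega, ?_, ?_, ?_⟩
        · have := slA j hj
          rw [show 2*(2*j) = 4*j by ring] at *
          omega
        · have := slB j hj
          rw [show 2*(2*j)+1 = 4*j+1 by ring]
          omega
        · rw [h2j]; nlinarith [hprod]
      · refine ⟨a₀ + 2*b₀ + c₀, c₀, by omega, hc₀, ?_, ?_, ?_⟩
        · have := slC j hj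
          rw [show 2*(2*j+1) = 4*j+2 by ring]
          omega
        · have := slD j hj
          rw [show 2*(2*j+1)+1 = 4*j+3 by ring]
          omega
        · rw [h2j1]; nlinarith [hprod]

lemma slPos : ∀ k, 2 ≤ k → 1 ≤ sternLike k := by
  intro k hk
  obtain ⟨j, hj, hpar⟩ : ∃ j, 1 ≤ j ∧ (k = 2*j ∨ k = 2*j+1) := ⟨k/2, by omega, by omega⟩
  obtain ⟨a₀, c₀, ha₀, hc₀, h2j, h2j1, -⟩ := slKey j hj
  rcases hpar with rfl | rfl <;> omega

lemma slSurj : ∀ b a : ℕ, 0 < a → a ∣ b^2 + 1 →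
    ∃ k, 1 ≤ k ∧ sternLike k = b ∧ sternLike (2*k) = b + a := by
  intro b
  induction b using Nat.strong_induction_on with
  | _ b ih =>
    intro a ha hdvd
    rcases Nat.eq_zero_or_pos b with rfl | hb
    · have : a = 1 := Nat.dvd_one.mp (by simpa using hdvd)
      subst this
      exact ⟨1, le_refl 1, by norm_num [sl1, sl2]⟩
    rcases le_or_gt a b with hab | hab
    · -- left child case
      set b' := b - a with hb'
      have hdvd' : a ∣ b'^2 + 1 := by
        have h1 : (a:ℤ) ∣ (b:ℤ)^2 + 1 := by exact_mod_cast hdvd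
        have h2 : ((b':ℤ)^2 + 1) = ((b:ℤ)^2 + 1) - a * (2*b' + a) := by
          have : (b:ℤ) = (b':ℤ) + a := by omega
          rw [this]; ring
        have h3 : (a:ℤ) ∣ ((b':ℤ)^2 + 1) := h2 ▸ dvd_sub h1 (Dvd.intro _ rfl)
        exact_mod_cast h3
      obtain ⟨j, hj1, hjS, hjS2⟩ := ih b' (by omega) a ha hdvd'
      refine ⟨2*j, by omega, ?_, ?_⟩
      · omega
      · have := slA j hj1
        rw [show 2*(2*j) = 4*j by ring]
        omega
    · -- right child case
      set c := (b^2+1)/a with hcdef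
      have hc : a * c = b^2 + 1 := Nat.mul_div_cancel' hdvd
      have hc1 : 0 < c := by nlinarith
      have hcb : c ≤ b := by nlinarith
      have hsum : 2*b + 1 ≤ a + c := by
        by_contra h
        push_neg at h
        have h1 : (a:ℤ) + c ≤ 2*b := by exact_mod_cast by omega
        have h2 : (a:ℤ) * c = (b:ℤ)^2 + 1 := by exact_mod_cast hc
        nlinarith [sq_nonneg ((a:ℤ) - c)]
      have ha'pos : 0 < a + c - 2*b := by omega
      have hc' : (a + c - 2*b) * c = (b - c)^2 + 1 := by
        zify [show 2*b ≤ a + c by omega, show c ≤ b from hcb]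
        have h2 : (a:ℤ) * c = (b:ℤ)^2 + 1 := by exact_mod_cast hc
        nlinarith
      obtain ⟨j, hj1, hjS, hjS2⟩ := ih (b - c) (by omega) (a + c - 2*b) ha'pos ⟨c, hc'.symm⟩
      obtain ⟨a₀, c₀, ha₀, hc₀, h2j, h2j1, hprod⟩ := slKey j hj1
      have haa : a₀ = a + c - 2*b := by omega
      have hcc : c₀ = c := by
        apply Nat.eq_of_mul_eq_mul_left ha'pos
        rw [← haa, hprod, hjS, ← hc', haa]
      refine ⟨2*j+1, by omega, by omega, ?_⟩
      have := slC j hj1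
      rw [show 2*(2*j+1) = 4*j+2 by ring]
      omega

lemma slNode : ∀ m, 2 ≤ m → ∃ i a c, 1 ≤ i ∧ 0 < a ∧ 0 < c ∧
    a * c = sternLike i ^ 2 + 1 ∧
    sternLike (2*i) = sternLike i + a ∧ sternLike (2*i+1) = sternLike i + c ∧
    ((m = 2*i ∧ sternLike m = sternLike i + a ∧ sternLike (2*m) = sternLike i + 2*a) ∨
     (m = 2*i+1 ∧ sternLike m = sternLike i + c ∧
        sternLike (2*m) = 2*sternLike m + sternLike i + a)) := by
  intro m hm
  obtain ⟨i, hi, hpar⟩ : ∃ i, 1 ≤ i ∧ (m = 2*i ∨ m = 2*i+1) := ⟨m/2, by omega, by omega⟩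
  obtain ⟨a, c, ha, hc, h2i, h2i1, hprod⟩ := slKey i hi
  refine ⟨i, a, c, hi, ha, hc, hprod, h2i, h2i1, ?_⟩
  rcases hpar with rfl | rfl
  · left
    refine ⟨rfl, h2i, ?_⟩
    have := slA i hi
    rw [show 2*(2*i) = 4*i by ring]
    omega
  · right
    refine ⟨rfl, h2i1, ?_⟩
    have := slC i hi
    rw [show 2*(2*i+1) = 4*i+2 by ring]
    omega

lemma slInj : ∀ b j k : ℕ, 1 ≤ j → 1 ≤ k → sternLike j = b → sternLike k = b →
    sternLike (2*j) = sternLike (2*k) → j = k := by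
  intro b
  induction b using Nat.strong_induction_on with
  | _ b ih =>
    intro j k hj hk hjb hkb h2
    rcases Nat.eq_zero_or_pos b with rfl | hb
    · -- S j = 0 forces j = 1
      have hj1 : j = 1 := by
        by_contra h
        have := slPos j (by omega)
        omega
      have hk1 : k = 1 := by
        by_contra h
        have := slPos k (by omega)
        omega
      rw [hj1, hk1]
    · have hj2 : 2 ≤ j := by
        rcases Nat.lt_or_ge j 2 with h | h
        · interval_cases j
          · rw [sl1] at hjb; omega
        · exact h
      have hk2 : 2 ≤ k := by
        rcases Nat.lt_or_ge k 2 with h | h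
        · interval_cases k
          · rw [sl1] at hkb; omega
        · exact h
      obtain ⟨i, a, c, hi, ha, hc, hp, h2i, h2i1, hcase⟩ := slNode j hj2
      obtain ⟨i', a', c', hi', ha', hc', hp', h2i', h2i1', hcase'⟩ := slNode k hk2
      rcases hcase with ⟨rfl, hS, hS2⟩ | ⟨rfl, hS, hS2⟩ <;>
        rcases hcase' with ⟨rfl, hS', hS2'⟩ | ⟨rfl, hS', hS2'⟩
      · -- both even
        have h1 : sternLike i = sternLike i' := by omega
        have h3 : sternLike (2*i) = sternLike (2*i') := by omega
        have := ih (sternLike i) (by omega) i i' hi hi' rfl h1.symm h3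
        omega
      · -- even / odd : contradiction
        omega
      · omega
      · -- both odd
        have hs : sternLike i + a = sternLike i' + a' := by omega
        have hbb : sternLike i + c = sternLike i' + c' := by omega
        have e1 : (sternLike i + a) * (sternLike i + c)
            = sternLike i * ((sternLike i + a) + (sternLike i + c)) + 1 := by
          rw [show (sternLike i + a) * (sternLike i + c)
              = sternLike i ^ 2 + sternLike i * c + a * sternLike i + a * c by ring, hp]
          ring
        have e2 : (sternLike i' + a') * (sternLike i' + c')
            = sternLike i' * ((sternLike i' + a') + (sternLike i' + c')) + 1 := by
          rw [show (sternLike i' + a') * (sternLike i' + c')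
              = sternLike i' ^ 2 + sternLike i' * c' + a' * sternLike i' + a' * c' by ring, hp']
          ring
        have hX : (sternLike i' + a') + (sternLike i' + c')
            = (sternLike i + a) + (sternLike i + c) := by omega
        rw [hX] at e2
        have hL : (sternLike i + a) * (sternLike i + c)
            = (sternLike i' + a') * (sternLike i' + c') := by rw [hs, hbb]
        have hmul : sternLike i * ((sternLike i + a) + (sternLike i + c))
            = sternLike i' * ((sternLike i + a) + (sternLike i + c)) := by
          linarith [e1, e2, hL]
        have h1 : sternLike i = sternLike i' :=
          Nat.eq_of_mul_eq_mul_right (by omega) hmul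
        have h3 : sternLike (2*i) = sternLike (2*i') := by omega
        have := ih (sternLike i) (by omega) i i' hi hi' rfl h1.symm h3
        omega

theorem sternLike_fiber_and_divisibility :
    (∀ n : ℕ, Set.ncard {k : ℕ | 1 ≤ k ∧ sternLike k = n} = (n^2 + 1).divisors.card) ∧
      (∀ k : ℕ, 1 ≤ k → (sternLike (2*k) - sternLike k) ∣ sternLike k ^ 2 + 1) := by
  constructor
  · intro n
    have hne : n^2 + 1 ≠ 0 := by positivity
    have hmem : ∀ k : ℕ, 1 ≤ k → sternLike k = n →
        (sternLike (2*k) - sternLike k) ∈ (n^2+1).divisors := by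
      intro k hk hkn
      obtain ⟨a, c, ha, hc, h2, h3, hp⟩ := slKey k hk
      rw [Nat.mem_divisors]
      refine ⟨?_, hne⟩
      have hsub : sternLike (2*k) - sternLike k = a := by omega
      rw [hsub, ← hkn]
      exact ⟨c, hp.symm⟩
    let g : {k : ℕ | 1 ≤ k ∧ sternLike k = n} → {d // d ∈ (n^2+1).divisors} :=
      fun k => ⟨sternLike (2*(k:ℕ)) - sternLike (k:ℕ), hmem k k.2.1 k.2.2⟩
    have hbij : Function.Bijective g := by
      constructor
      · rintro ⟨j, hj1, hj2⟩ ⟨k, hk1, hk2⟩ h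
        simp only [g, Subtype.mk.injEq] at h
        obtain ⟨a, c, ha, hc, h2, h3, hp⟩ := slKey j hj1
        obtain ⟨a', c', ha', hc', h2', h3', hp'⟩ := slKey k hk1
        have h22 : sternLike (2*j) = sternLike (2*k) := by omega
        exact Subtype.ext (slInj n j k hj1 hk1 hj2 hk2 h22)
      · rintro ⟨d, hd⟩
        rw [Nat.mem_divisors] at hd
        have hdpos : 0 < d := Nat.pos_of_dvd_of_pos hd.1 (by positivity)
        obtain ⟨k, hk1, hk2, hk3⟩ := slSurj n d hdpos hd.1
        refine ⟨⟨k, hk1, hk2⟩, Subtype.ext ?_⟩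
        simp only [g]
        omega
    rw [← Nat.card_coe_set_eq, Nat.card_congr (Equiv.ofBijective g hbij)]
    exact Nat.card_eq_finsetCard _
  · intro k hk
    obtain ⟨a, c, ha, hc, h2, h3, hp⟩ := slKey k hk
    have hsub : sternLike (2*k) - sternLike k = a := by omega
    rw [hsub]
    exact ⟨c, hp.symm⟩
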